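/- Let A be an effect on ℂ². There exists no effect B on ℂ² with B^∼ strictly contained in A^∼ if and only if A is a rank-one projection, where X^∼ denotes the set of effects coexistent with X. -/

import Mathlib

noncomputable section

/-- An effect on a complex Hilbert space: a positive operator below the identity. -/
def IsEffect {H : Type*} [NormedAddCommGroup H] [InnerProductSpace ℂ H] [CompleteSpace H]
    (A : H →L[ℂ] H) : Prop :=
  A.IsPositive ∧ ((1 : H →L[ℂ] H) - A).IsPositive

/-- Effects `A`, `B` are coexistent: there are effects `M ≤ A`, `N ≤ I - A` with `M + N = B`. -/
def Coexistent {H : Type*} [NormedAddCommGroup H] [InnerProductSpace ℂ H] [CompleteSpace H]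
    (A B : H →L[ℂ] H) : Prop :=
  ∃ M N : H →L[ℂ] H, IsEffect M ∧ IsEffect N ∧
    (A - M).IsPositive ∧ (((1 : H →L[ℂ] H) - A) - N).IsPositive ∧ M + N = B

/-- A rank-one orthogonal projection. -/
def IsRankOneProjection {H : Type*} [NormedAddCommGroup H] [InnerProductSpace ℂ H]
    [CompleteSpace H] (P : H →L[ℂ] H) : Prop :=
  IsSelfAdjoint P ∧ P ∘L P = P ∧ Module.finrank ℂ (LinearMap.range (P : H →ₗ[ℂ] H)) = 1

/-- The strength function `Λ(B,P) = sup {λ ≥ 0 : λP ≤ B}`. -/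
def strength {H : Type*} [NormedAddCommGroup H] [InnerProductSpace ℂ H] [CompleteSpace H]
    (B P : H →L[ℂ] H) : ℝ :=
  sSup {l : ℝ | 0 ≤ l ∧ (B - (l : ℂ) • P).IsPositive}

abbrev E2 := EuclideanSpace ℂ (Fin 2)


open ContinuousLinearMap
open scoped InnerProductSpace ComplexConjugate
set_option linter.unusedSectionVars false
section Aux

variable {H : Type*} [NormedAddCommGroup H] [InnerProductSpace ℂ H] [CompleteSpace H]

lemma pos_smul {r : ℝ} (hr : 0 ≤ r) {T : H →L[ℂ] H} (hT : T.IsPositive) :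
    ((r : ℂ) • T).IsPositive := by
  refine isPositive_def'.mpr ⟨?_, ?_⟩
  · have h := hT.isSelfAdjoint
    rw [IsSelfAdjoint] at h ⊢
    rw [star_smul, h]
    simp
  · intro x
    have := hT.2 x
    simp only [reApplyInnerSelf, smul_apply, inner_smul_left] at *
    simp only [Complex.conj_ofReal]
    rw [show ((r:ℂ) * ⟪T x, x⟫_ℂ) = r • ⟪T x, x⟫_ℂ by simp [RCLike.real_smul_eq_coe_mul], RCLike.smul_re]
    positivity

set_option linter.unusedSectionVars false

/-- rank-one projection onto the line of `e` -/
def projL (e : H) : H →L[ℂ] H := (innerSL ℂ e).smulRight e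

@[simp] lemma projL_apply (e x : H) : projL e x = ⟪e, x⟫_ℂ • e := rfl

lemma projL_isSymm (e : H) : ((projL e : H →L[ℂ] H) : H →ₗ[ℂ] H).IsSymmetric := by
  intro x y
  simp [inner_smul_left, inner_smul_right, mul_comm]

lemma projL_sa (e : H) : IsSelfAdjoint (projL e) :=
  (isSelfAdjoint_iff_isSymmetric).2 (projL_isSymm e)

lemma projL_idem {e : H} (he : ‖e‖ = 1) : projL e ∘L projL e = projL e := by
  ext x
  simp [inner_smul_right, inner_self_eq_norm_sq_to_K, he]

lemma projL_pos (e : H) : (projL e).IsPositive := by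
  refine isPositive_def'.mpr ⟨projL_sa e, fun x => ?_⟩
  simp only [reApplyInnerSelf, projL_apply, inner_smul_left]
  rw [mul_comm, Complex.mul_conj]
  simp [Complex.normSq_nonneg]


lemma pos_apply_eq_zero {T : H →L[ℂ] H} (hT : T.IsPositive) {x : H}
    (hx : RCLike.re ⟪T x, x⟫_ℂ = 0) : T x = 0 := by
  have hsymm := isSelfAdjoint_iff_isSymmetric.1 hT.isSelfAdjoint
  have key : ∀ y : H, RCLike.re ⟪T x, y⟫_ℂ = 0 := by
    intro y
    set a : ℝ := RCLike.re ⟪T x, y⟫_ℂ with ha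
    set b : ℝ := RCLike.re ⟪T y, y⟫_ℂ with hb
    have hb0 : 0 ≤ b := hT.2 y
    set t : ℝ := -a / (b + 1) with ht
    have hq : 0 ≤ RCLike.re ⟪T (x + (t:ℂ) • y), x + (t:ℂ) • y⟫_ℂ := hT.2 _
    have hyx : RCLike.re ⟪T y, x⟫_ℂ = a := by
      have h1 : ⟪T y, x⟫_ℂ = conj ⟪T x, y⟫_ℂ := by
        rw [show ⟪T y, x⟫_ℂ = ⟪y, T x⟫_ℂ from hsymm y x, ← inner_conj_symm]
      rw [h1, RCLike.conj_re, ha]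
    have expand : RCLike.re ⟪T (x + (t:ℂ) • y), x + (t:ℂ) • y⟫_ℂ
        = 2 * t * a + t ^ 2 * b := by
      have hc : ⟪T (x + (t:ℂ) • y), x + (t:ℂ) • y⟫_ℂ
          = ⟪T x, x⟫_ℂ + ((t:ℝ) • ⟪T x, y⟫_ℂ + ((t:ℝ) • ⟪T y, x⟫_ℂ
            + ((t^2 : ℝ)) • ⟪T y, y⟫_ℂ)) := by
        rw [map_add, ContinuousLinearMap.map_smul]
        simp only [inner_add_left, inner_add_right, inner_smul_left, inner_smul_right,
          Complex.conj_ofReal, Complex.real_smul]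
        push_cast
        ring
      rw [hc, map_add, map_add, map_add, RCLike.smul_re, RCLike.smul_re, RCLike.smul_re,
        hx, hyx, ← ha, ← hb]
      ring
    rw [expand] at hq
    have h2 : 2 * t * a + t ^ 2 * b = a ^ 2 * (-(b + 2)) / (b + 1) ^ 2 := by
      rw [ht]; field_simp; ring
    rw [h2] at hq
    have hb1 : (0:ℝ) < (b + 1) ^ 2 := by positivity
    have : a ^ 2 * (-(b + 2)) ≥ 0 := by
      have := (div_nonneg_iff.mp hq)
      rcases this with ⟨h, _⟩ | ⟨h, h'⟩
      · exact h
      · nlinarith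
    nlinarith [sq_nonneg a]
  have := key (T x)
  have h0 : (‖T x‖ : ℝ) ^ 2 = 0 := by
    rw [← @inner_self_eq_norm_sq ℂ] at *
    exact this
  simpa using h0

lemma commute_of_le_idem {R N : H →L[ℂ] H} (hR : IsSelfAdjoint R) (hR2 : R ∘L R = R)
    (hN : N.IsPositive) (hNR : (R - N).IsPositive) : N ∘L R = N ∧ R ∘L N = N := by
  have hker : ∀ x, R x = 0 → N x = 0 := by
    intro x hx
    apply pos_apply_eq_zero hN
    have h1 := hNR.2 x
    have h2 := hN.2 x
    simp only [reApplyInnerSelf, sub_apply, inner_sub_left, map_sub, hx,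
      inner_zero_left, map_zero] at h1 h2 ⊢
    linarith
  have key : N ∘L (1 - R) = 0 := by
    ext x
    have hRx : R ((1 - R) x) = 0 := by
      have h0 : R ∘L (1 - R) = 0 := by
        rw [ContinuousLinearMap.comp_sub, hR2]
        have : R ∘L 1 = R := mul_one R
        rw [this, sub_self]
      calc R ((1 - R) x) = (R ∘L (1 - R)) x := rfl
        _ = 0 := by rw [h0]; rfl
    show N ((1 - R) x) = 0
    exact hker _ hRx
  have h1 : N ∘L R = N := by
    rw [ContinuousLinearMap.comp_sub] at key
    rw [show N ∘L (1 : H →L[ℂ] H) = N from mul_one N] at key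
    have := sub_eq_zero.mp key
    exact this.symm
  refine ⟨h1, ?_⟩
  have hadj : R ∘L N = star (N ∘L R) := by
    rw [ContinuousLinearMap.star_eq_adjoint, ContinuousLinearMap.adjoint_comp,
      ← ContinuousLinearMap.star_eq_adjoint, ← ContinuousLinearMap.star_eq_adjoint,
      hN.isSelfAdjoint.star_eq, hR.star_eq]
  rw [hadj, h1, hN.isSelfAdjoint.star_eq]

lemma eq_smul_projL {e : H} (he : ‖e‖ = 1) {M : H →L[ℂ] H} (hM : M.IsPositive)
    (hMP : (projL e - M).IsPositive) :
    ∃ l : ℝ, 0 ≤ l ∧ l ≤ 1 ∧ M = (l : ℂ) • projL e := by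
  obtain ⟨h1, h2⟩ := commute_of_le_idem (projL_sa e) (projL_idem he) hM hMP
  have hee : ⟪e, e⟫_ℂ = 1 := by
    rw [inner_self_eq_norm_sq_to_K, he]; norm_num
  have hPe : projL e e = e := by simp [hee, he]
  have hMe2 : M e = ⟪e, M e⟫_ℂ • e := by
    have h3 : projL e (M e) = M e := by
      calc projL e (M e) = (projL e ∘L M) e := rfl
        _ = M e := by rw [h2]
    conv_lhs => rw [← h3]
    rfl
  have hsymm := isSelfAdjoint_iff_isSymmetric.1 hM.isSelfAdjoint
  have hsymm' : ∀ u v : H, ⟪M u, v⟫_ℂ = ⟪u, M v⟫_ℂ := fun u v => hsymm u v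
  set c := ⟪e, M e⟫_ℂ with hc
  have hcc : conj c = c := by
    rw [hc, inner_conj_symm]
    exact hsymm' e e
  have h5 : ⟪M e, e⟫_ℂ = c := hsymm' e e
  set l := RCLike.re c with hl
  have hcr : (l : ℂ) = c := by
    rw [hl]
    exact RCLike.conj_eq_iff_re.mp hcc
  have hl0 : 0 ≤ l := by
    have := hM.2 e
    simp only [reApplyInnerSelf, h5] at this
    exact this
  have hl1 : l ≤ 1 := by
    have := hMP.2 e
    simp only [reApplyInnerSelf, sub_apply, inner_sub_left, map_sub, hPe, hee, h5, RCLike.one_re] at this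
    linarith
  refine ⟨l, hl0, hl1, ?_⟩
  ext x
  have h6 : M x = ⟪e, x⟫_ℂ • M e := by
    have h7 : (M ∘L projL e) x = M x := by rw [h1]
    calc M x = M (projL e x) := h7.symm
      _ = ⟪e, x⟫_ℂ • M e := by rw [projL_apply, map_smul]
  rw [h6, hMe2]
  simp only [ContinuousLinearMap.smul_apply, projL_apply]
  rw [smul_smul, smul_smul, mul_comm, hcr]



lemma idem_pos {R : H →L[ℂ] H} (hR : IsSelfAdjoint R) (hR2 : R ∘L R = R) : R.IsPositive := by
  refine isPositive_def'.mpr ⟨hR, fun x => ?_⟩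
  have hsymm := isSelfAdjoint_iff_isSymmetric.1 hR
  have h1 : ⟪R x, x⟫_ℂ = ⟪R x, R x⟫_ℂ := by
    conv_lhs => rw [show R x = R (R x) by rw [← ContinuousLinearMap.comp_apply, hR2]]
    exact hsymm (R x) x
  simp only [reApplyInnerSelf, h1]
  exact inner_self_nonneg

lemma sandwich_pos {R D : H →L[ℂ] H} (hR : IsSelfAdjoint R) (hD : D.IsPositive) :
    (R * D * R).IsPositive := by
  have h := hD.conj_adjoint R
  rw [← ContinuousLinearMap.star_eq_adjoint, hR.star_eq] at h
  exact h

lemma effect_zero : IsEffect (0 : H →L[ℂ] H) := by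
  refine ⟨isPositive_zero, ?_⟩
  rw [sub_zero]
  exact isPositive_one

lemma coexistent_self {B : H →L[ℂ] H} (hB : IsEffect B) : Coexistent B B := by
  refine ⟨B, 0, hB, effect_zero, by rw [sub_self]; exact isPositive_zero,
    by rw [sub_zero]; exact hB.2, by rw [add_zero]⟩

lemma coexistent_scalar {c : ℝ} (h0 : 0 ≤ c) (h1 : c ≤ 1) {C : H →L[ℂ] H} (hC : IsEffect C) :
    Coexistent ((c : ℂ) • 1) C := by
  refine ⟨(c : ℂ) • C, ((1 - c : ℝ) : ℂ) • C, ?_, ?_, ?_, ?_, ?_⟩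
  · refine ⟨pos_smul h0 hC.1, ?_⟩
    have hid : (1 : H →L[ℂ] H) - (c : ℂ) • C
        = (c : ℂ) • (1 - C) + ((1 - c : ℝ) : ℂ) • 1 := by
      push_cast
      module
    rw [hid]
    exact (pos_smul h0 hC.2).add (pos_smul (by linarith) isPositive_one)
  · refine ⟨pos_smul (by linarith) hC.1, ?_⟩
    have hid : (1 : H →L[ℂ] H) - ((1 - c : ℝ) : ℂ) • C
        = ((1 - c : ℝ) : ℂ) • (1 - C) + (c : ℂ) • 1 := by
      push_cast
      module
    rw [hid]
    exact (pos_smul (by linarith) hC.2).add (pos_smul h0 isPositive_one)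
  · have hid : (c : ℂ) • (1 : H →L[ℂ] H) - (c : ℂ) • C = (c : ℂ) • (1 - C) := by
      rw [smul_sub]
    rw [hid]
    exact pos_smul h0 hC.2
  · have hid : (1 : H →L[ℂ] H) - (c : ℂ) • 1 - ((1 - c : ℝ) : ℂ) • C
        = ((1 - c : ℝ) : ℂ) • (1 - C) := by
      push_cast
      module
    rw [hid]
    exact pos_smul (by linarith) hC.2
  · push_cast
    module

lemma coexistent_of_commute {P C : H →L[ℂ] H} (hPsa : IsSelfAdjoint P) (hP2 : P * P = P)
    {α β : ℝ} (hα0 : 0 ≤ α) (hα1 : α ≤ 1) (hβ0 : 0 ≤ β) (hβ1 : β ≤ 1)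
    (hC : IsEffect C) (hcomm : C * P = P * C) :
    Coexistent ((α : ℂ) • P + (β : ℂ) • (1 - P)) C := by
  set Q : H →L[ℂ] H := 1 - P with hQdef
  have hQsa : IsSelfAdjoint Q := IsSelfAdjoint.sub (IsSelfAdjoint.one _) hPsa
  have hQ2 : Q * Q = Q := by
    have h : Q * Q = 1 - P - P + P * P := by rw [hQdef]; noncomm_ring
    rw [h, hP2, hQdef]; abel
  have hPpos : P.IsPositive := idem_pos hPsa hP2
  have hQpos : Q.IsPositive := idem_pos hQsa hQ2
  have hPCP : (P * C * P).IsPositive := sandwich_pos hPsa hC.1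
  have hQCQ : (Q * C * Q).IsPositive := sandwich_pos hQsa hC.1
  have hPC'P : (P * (1 - C) * P).IsPositive := sandwich_pos hPsa hC.2
  have hQC'Q : (Q * (1 - C) * Q).IsPositive := sandwich_pos hQsa hC.2
  have idP : P * (1 - C) * P = P - P * C * P := by
    have h : P * (1 - C) * P = P * P - P * C * P := by noncomm_ring
    rw [h, hP2]
  have idQ : Q * (1 - C) * Q = Q - Q * C * Q := by
    have h : Q * (1 - C) * Q = Q * Q - Q * C * Q := by noncomm_ring
    rw [h, hQ2]
  set A : H →L[ℂ] H := (α : ℂ) • P + (β : ℂ) • Q with hAdef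
  set M : H →L[ℂ] H := (α : ℂ) • (P * C * P) + (β : ℂ) • (Q * C * Q) with hMdef
  set N : H →L[ℂ] H := ((1 - α : ℝ) : ℂ) • (P * C * P) + ((1 - β : ℝ) : ℂ) • (Q * C * Q)
    with hNdef
  have hAM : A - M = (α : ℂ) • (P * (1 - C) * P) + (β : ℂ) • (Q * (1 - C) * Q) := by
    rw [idP, idQ, hAdef, hMdef]
    module
  have hAMpos : (A - M).IsPositive := by
    rw [hAM]
    exact (pos_smul hα0 hPC'P).add (pos_smul hβ0 hQC'Q)
  have hone : (1 : H →L[ℂ] H) = P + Q := by rw [hQdef]; abel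
  have hIA : (1 : H →L[ℂ] H) - A - N
      = ((1 - α : ℝ) : ℂ) • (P * (1 - C) * P) + ((1 - β : ℝ) : ℂ) • (Q * (1 - C) * Q) := by
    rw [idP, idQ, hAdef, hNdef, hone]
    push_cast
    module
  have hIApos : ((1 : H →L[ℂ] H) - A - N).IsPositive := by
    rw [hIA]
    exact (pos_smul (by linarith) hPC'P).add (pos_smul (by linarith) hQC'Q)
  have hMpos : M.IsPositive := (pos_smul hα0 hPCP).add (pos_smul hβ0 hQCQ)
  have hNpos : N.IsPositive := (pos_smul (by linarith) hPCP).add (pos_smul (by linarith) hQCQ)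
  have hApos : A.IsPositive := (pos_smul hα0 hPpos).add (pos_smul hβ0 hQpos)
  have hMeff : IsEffect M := by
    refine ⟨hMpos, ?_⟩
    have h : (1 : H →L[ℂ] H) - M = (A - M) + ((1 - A - N) + N) := by abel
    rw [h]
    exact hAMpos.add (hIApos.add hNpos)
  have hNeff : IsEffect N := by
    refine ⟨hNpos, ?_⟩
    have h : (1 : H →L[ℂ] H) - N = (1 - A - N) + A := by abel
    rw [h]
    exact hIApos.add hApos
  have hcommQ : C * Q = Q * C := by
    rw [hQdef]
    have h1 : C * (1 - P) = C - C * P := by noncomm_ring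
    have h2 : (1 - P) * C = C - P * C := by noncomm_ring
    rw [h1, h2, hcomm]
  have hMN : M + N = C := by
    have h : M + N = (P * C * P) + (Q * C * Q) := by
      rw [hMdef, hNdef]
      push_cast
      module
    rw [h]
    have hP3 : P * C * P = C * P := by
      rw [show P * C = C * P from hcomm.symm, mul_assoc, hP2]
    have hQ3 : Q * C * Q = C * Q := by
      rw [show Q * C = C * Q from hcommQ.symm, mul_assoc, hQ2]
    rw [hP3, hQ3, ← mul_add, ← hone, mul_one]
  exact ⟨M, N, hMeff, hNeff, hAMpos, hIApos, hMN⟩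

lemma commute_of_coexistent_proj {e : H} (he : ‖e‖ = 1) {C : H →L[ℂ] H}
    (hcoex : Coexistent (projL e) C) : C * projL e = projL e * C := by
  obtain ⟨M, N, hM, hN, hPM, hPN, hMN⟩ := hcoex
  set P : H →L[ℂ] H := projL e with hPdef
  have hPsa : IsSelfAdjoint P := projL_sa e
  have hP2 : P ∘L P = P := projL_idem he
  set Q : H →L[ℂ] H := 1 - P with hQdef
  have hQsa : IsSelfAdjoint Q := IsSelfAdjoint.sub (IsSelfAdjoint.one _) hPsa
  have hQ2 : Q ∘L Q = Q := by
    have h : Q * Q = 1 - P - P + P * P := by rw [hQdef]; noncomm_ring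
    show Q * Q = Q
    rw [h, show P * P = P from hP2, hQdef]; abel
  obtain ⟨hM1, hM2⟩ := commute_of_le_idem hPsa hP2 hM.1 hPM
  obtain ⟨hN1, hN2⟩ := commute_of_le_idem hQsa hQ2 hN.1 hPN
  -- M commutes with P, N commutes with Q hence with P
  have hMP : M * P = P * M := by
    show M ∘L P = P ∘L M
    rw [hM1, hM2]
  have hNQ : N * Q = Q * N := by
    show N ∘L Q = Q ∘L N
    rw [hN1, hN2]
  have hNP : N * P = P * N := by
    have h1 : N * Q = N - N * P := by rw [hQdef]; noncomm_ring
    have h2 : Q * N = N - P * N := by rw [hQdef]; noncomm_ring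
    rw [h1, h2] at hNQ
    exact sub_right_inj.mp hNQ
  rw [← hMN, add_mul, mul_add, hMP, hNP]


lemma one_sub_idem {P : H →L[ℂ] H} (hP2 : P * P = P) : (1 - P) * (1 - P) = 1 - P := by
  have h : (1 - P) * (1 - P) = 1 - P - P + P * P := by noncomm_ring
  rw [h, hP2]; abel

lemma projL_ne_zero {e : H} (he : ‖e‖ = 1) : e ≠ 0 := by
  intro h; rw [h, norm_zero] at he; norm_num at he

lemma inner_self_one {e : H} (he : ‖e‖ = 1) : ⟪e, e⟫_ℂ = 1 := by
  rw [inner_self_eq_norm_sq_to_K, he]; norm_num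

lemma projL_rankOne {e : H} (he : ‖e‖ = 1) : IsRankOneProjection (projL e) := by
  refine ⟨projL_sa e, projL_idem he, ?_⟩
  have hrange : LinearMap.range ((projL e : H →L[ℂ] H) : H →ₗ[ℂ] H) = ℂ ∙ e := by
    apply le_antisymm
    · rintro y ⟨x, rfl⟩
      show ⟪e, x⟫_ℂ • e ∈ ℂ ∙ e
      exact Submodule.smul_mem _ _ (Submodule.mem_span_singleton_self e)
    · rw [Submodule.span_singleton_le_iff_mem]
      exact ⟨e, by simp [inner_self_one he, he]⟩
  rw [hrange]
  exact finrank_span_singleton (projL_ne_zero he)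

lemma proj_effect {e : H} (he : ‖e‖ = 1) : IsEffect (projL e) := by
  refine ⟨projL_pos e, ?_⟩
  have hsa : IsSelfAdjoint ((1 : H →L[ℂ] H) - projL e) :=
    IsSelfAdjoint.sub (IsSelfAdjoint.one _) (projL_sa e)
  refine idem_pos hsa ?_
  exact one_sub_idem (projL_idem he)

lemma smul_proj_effect {g : H} (hg : ‖g‖ = 1) {c : ℝ} (h0 : 0 ≤ c) (h1 : c ≤ 1) :
    IsEffect ((c : ℂ) • projL g) := by
  refine ⟨pos_smul h0 (projL_pos g), ?_⟩
  have hid : (1 : H →L[ℂ] H) - (c : ℂ) • projL g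
      = (c : ℂ) • (1 - projL g) + ((1 - c : ℝ) : ℂ) • 1 := by
    push_cast; module
  rw [hid]
  exact (pos_smul h0 (proj_effect hg).2).add (pos_smul (by linarith) isPositive_one)

lemma rankOne_exists_projL [FiniteDimensional ℂ H] {P : H →L[ℂ] H}
    (hP : IsRankOneProjection P) : ∃ e : H, ‖e‖ = 1 ∧ P = projL e := by
  obtain ⟨hsa, hP2, hrk⟩ := hP
  set V := LinearMap.range ((P : H →L[ℂ] H) : H →ₗ[ℂ] H) with hV
  have : Nontrivial V := Module.nontrivial_of_finrank_pos (R := ℂ) (by rw [hrk]; norm_num)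
  obtain ⟨v, hv⟩ := exists_ne (0 : V)
  have hv0 : (v : H) ≠ 0 := fun h => hv (Subtype.ext h)
  set e : H := (‖(v : H)‖⁻¹ : ℝ) • (v : H) with hedef
  have henorm : ‖e‖ = 1 := by
    rw [hedef, norm_smul]
    field_simp
    simp [hv0]
  have heV : e ∈ V := V.smul_mem _ v.2
  have hPfix : ∀ u, u ∈ V → P u = u := by
    rintro u ⟨w, rfl⟩
    show P (P w) = P w
    rw [← ContinuousLinearMap.comp_apply, hP2]
  have hPe : P e = e := hPfix e heV
  have he0 : e ≠ 0 := projL_ne_zero henorm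
  have hspan : V = ℂ ∙ e := by
    refine (Submodule.eq_of_le_of_finrank_le ?_ ?_).symm
    · rw [Submodule.span_singleton_le_iff_mem]; exact heV
    · rw [hrk, finrank_span_singleton he0]
  have hee : ⟪e, e⟫_ℂ = 1 := inner_self_one henorm
  have hsymm := isSelfAdjoint_iff_isSymmetric.1 hsa
  refine ⟨e, henorm, ContinuousLinearMap.ext fun x => ?_⟩
  have hx : P x ∈ V := ⟨x, rfl⟩
  rw [hspan] at hx
  obtain ⟨c, hc⟩ := Submodule.mem_span_singleton.mp hx
  have hce : ⟪e, P x⟫_ℂ = c := by rw [← hc, inner_smul_right, hee, mul_one]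
  have hcx : ⟪e, P x⟫_ℂ = ⟪e, x⟫_ℂ := by
    have h1 : ⟪P e, x⟫_ℂ = ⟪e, P x⟫_ℂ := hsymm e x
    rw [← h1, hPe]
  rw [projL_apply, ← hc, ← hce, hcx]

lemma noncomm_witness {e f : H} (he : ‖e‖ = 1) (hf : ‖f‖ = 1) (hef : ⟪e, f⟫_ℂ = 0) :
    ∃ g : H, ‖g‖ = 1 ∧ projL e * projL g ≠ projL g * projL e := by
  have hfe : ⟪f, e⟫_ℂ = 0 := by rw [← inner_conj_symm, hef, map_zero]
  set r : ℝ := (Real.sqrt 2)⁻¹ with hrdef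
  set g : H := (r : ℂ) • (e + f) with hgdef
  have hs2 : (0 : ℝ) < Real.sqrt 2 := Real.sqrt_pos.mpr (by norm_num)
  have hr0 : 0 < r := inv_pos.mpr hs2
  have hnormef : ‖e + f‖ = Real.sqrt 2 := by
    have h := norm_add_sq_eq_norm_sq_add_norm_sq_of_inner_eq_zero e f hef
    rw [he, hf] at h
    rw [show ‖e + f‖ = Real.sqrt (‖e + f‖ * ‖e + f‖) by
      rw [Real.sqrt_mul_self (norm_nonneg _)], h]
    norm_num
  have hgnorm : ‖g‖ = 1 := by
    rw [hgdef, norm_smul, hnormef]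
    have : ‖(r : ℂ)‖ = r := by
      rw [Complex.norm_real, Real.norm_eq_abs, abs_of_pos hr0]
    rw [this, hrdef]
    exact inv_mul_cancel₀ (ne_of_gt hs2)
  have hge : ⟪g, e⟫_ℂ = (r : ℂ) := by
    rw [hgdef, inner_smul_left, inner_add_left, inner_self_one he, hfe, Complex.conj_ofReal]
    ring
  have heg : ⟪e, g⟫_ℂ = (r : ℂ) := by
    rw [hgdef, inner_smul_right, inner_add_right, inner_self_one he, hef]
    ring
  refine ⟨g, hgnorm, fun hcontra => ?_⟩
  have happ := ContinuousLinearMap.ext_iff.mp hcontra e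
  have hl : (projL e * projL g) e = ((r : ℂ) * (r : ℂ)) • e := by
    show projL e (projL g e) = _
    rw [show projL g e = (r : ℂ) • g from by rw [projL_apply, hge]]
    rw [map_smul, projL_apply, heg, smul_smul]
  have hr2 : (projL g * projL e) e = ((r : ℂ) * (r : ℂ)) • (e + f) := by
    show projL g (projL e e) = _
    rw [show projL e e = e from by rw [projL_apply, inner_self_one he, one_smul]]
    rw [projL_apply, hge, hgdef, smul_smul]
  rw [hl, hr2] at happ
  have hssq : ((r : ℂ) * (r : ℂ)) ≠ 0 := by
    have hrne : (r : ℂ) ≠ 0 := by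
      simpa using ne_of_gt hr0
    exact mul_ne_zero hrne hrne
  have hf0 : f = 0 := by
    have h2 : ((r:ℂ) * (r:ℂ)) • f = 0 := by
      rw [smul_add] at happ
      have h3 := sub_eq_zero.mpr happ
      rw [show ((r:ℂ)*(r:ℂ)) • e - (((r:ℂ)*(r:ℂ)) • e + ((r:ℂ)*(r:ℂ)) • f)
          = -(((r:ℂ)*(r:ℂ)) • f) from by abel] at h3
      rw [neg_eq_zero] at h3
      exact h3
    exact (smul_eq_zero.mp h2).resolve_left hssq
  exact projL_ne_zero hf hf0

end Aux

section E2Lemmas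

lemma projL_basis_sum (b : OrthonormalBasis (Fin 2) ℂ E2) :
    projL (b 0) + projL (b 1) = 1 := by
  refine ContinuousLinearMap.ext fun x => ?_
  have h := b.sum_repr' x
  simp only [Fin.sum_univ_two] at h
  simp only [ContinuousLinearMap.add_apply, ContinuousLinearMap.one_apply, projL_apply]
  exact h

lemma exists_partner {e : E2} (he : ‖e‖ = 1) :
    ∃ f : E2, ‖f‖ = 1 ∧ ⟪e, f⟫_ℂ = 0 ∧ projL e + projL f = 1 := by
  have hcard : Module.finrank ℂ E2 = Fintype.card (Fin 2) := by
    simp [finrank_euclideanSpace]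
  have horth : Orthonormal ℂ (Set.restrict ({0} : Set (Fin 2)) (fun _ : Fin 2 => e)) := by
    constructor
    · intro i; exact he
    · intro i j hij
      exact absurd (Subtype.ext (by
        have hi := i.2; have hj := j.2
        simp only [Set.mem_singleton_iff] at hi hj
        rw [hi, hj])) hij
  obtain ⟨b, hb⟩ := horth.exists_orthonormalBasis_extension_of_card_eq hcard
  have hb0 : b 0 = e := hb 0 rfl
  refine ⟨b 1, b.orthonormal.1 1, ?_, ?_⟩
  · rw [← hb0]
    exact b.orthonormal.2 (by norm_num : (0 : Fin 2) ≠ 1)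
  · have := projL_basis_sum b
    rwa [hb0] at this

lemma spectral_decomp (A : E2 →L[ℂ] E2) (hA : IsEffect A) :
    ∃ (a b : ℝ) (e : E2), 0 ≤ a ∧ a ≤ 1 ∧ 0 ≤ b ∧ b ≤ 1 ∧ ‖e‖ = 1 ∧
      A = (a : ℂ) • projL e + (b : ℂ) • (1 - projL e) := by
  have hsa : IsSelfAdjoint A := hA.1.isSelfAdjoint
  have hsymm := isSelfAdjoint_iff_isSymmetric.1 hsa
  have hn : Module.finrank ℂ E2 = 2 := finrank_euclideanSpace_fin
  set b2 := hsymm.eigenvectorBasis hn with hb2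
  set μ := hsymm.eigenvalues hn with hμ
  have heig : ∀ i : Fin 2, A (b2 i) = (μ i : ℂ) • b2 i := fun i =>
    hsymm.apply_eigenvectorBasis hn i
  have hone : ∀ i : Fin 2, ⟪b2 i, b2 i⟫_ℂ = 1 := by
    intro i
    rw [inner_self_eq_norm_sq_to_K, b2.orthonormal.1 i]
    norm_num
  have hbound : ∀ i : Fin 2, 0 ≤ μ i ∧ μ i ≤ 1 := by
    intro i
    have hre : RCLike.re ⟪A (b2 i), b2 i⟫_ℂ = μ i := by
      rw [heig i, inner_smul_left, hone i, Complex.conj_ofReal]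
      simp
    constructor
    · have := hA.1.2 (b2 i)
      simp only [reApplyInnerSelf] at this
      linarith [hre ▸ this]
    · have := hA.2.2 (b2 i)
      simp only [reApplyInnerSelf, sub_apply, inner_sub_left, map_sub, one_apply_eq_self,
        hone i, RCLike.one_re] at this
      linarith [this, hre]
  have horth01 : ⟪b2 0, b2 1⟫_ℂ = 0 := b2.orthonormal.2 (by norm_num : (0 : Fin 2) ≠ 1)
  have horth10 : ⟪b2 1, b2 0⟫_ℂ = 0 := b2.orthonormal.2 (by norm_num : (1 : Fin 2) ≠ 0)
  refine ⟨μ 0, μ 1, b2 0, (hbound 0).1, (hbound 0).2, (hbound 1).1, (hbound 1).2,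
    b2.orthonormal.1 0, ?_⟩
  have h1 : (1 : E2 →L[ℂ] E2) - projL (b2 0) = projL (b2 1) := by
    rw [← projL_basis_sum b2]; abel
  rw [h1]
  refine ContinuousLinearMap.coe_injective (b2.toBasis.ext fun i => ?_)
  rw [show b2.toBasis i = b2 i from congrFun b2.coe_toBasis i]
  show A (b2 i) = ((μ 0 : ℂ) • projL (b2 0) + (μ 1 : ℂ) • projL (b2 1)) (b2 i)
  rw [heig i]
  have hi : i = 0 ∨ i = 1 := by fin_cases i; exacts [Or.inl rfl, Or.inr rfl]
  rcases hi with hi | hi <;> subst hi <;>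
    simp only [ContinuousLinearMap.add_apply, ContinuousLinearMap.smul_apply, projL_apply,
      hone, horth01, horth10, one_smul, zero_smul, smul_zero, add_zero, zero_add, Fin.isValue]


lemma construction {A : E2 →L[ℂ] E2} (hA : IsEffect A) {a b : ℝ} {e f : E2}
    (he : ‖e‖ = 1) (hf : ‖f‖ = 1) (hef : ⟪e, f⟫_ℂ = 0)
    (ha0 : 0 ≤ a) (ha1 : a ≤ 1) (hb0 : 0 ≤ b) (hb1 : b ≤ 1) (hab : b ≤ a)
    (hdec : A = (a : ℂ) • projL e + (b : ℂ) • (1 - projL e))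
    (hnot : ¬ IsRankOneProjection A) :
    ∃ B : E2 →L[ℂ] E2, IsEffect B ∧
      {C : E2 →L[ℂ] E2 | IsEffect C ∧ Coexistent B C} ⊂
        {C : E2 →L[ℂ] E2 | IsEffect C ∧ Coexistent A C} := by
  set P : E2 →L[ℂ] E2 := projL e with hPdef
  have hPsa : IsSelfAdjoint P := projL_sa e
  have hP2 : P * P = P := projL_idem he
  obtain ⟨g, hg, hgnc⟩ := noncomm_witness he hf hef
  have hPeff : IsEffect P := proj_effect he
  have hgeff : IsEffect (projL g) := proj_effect hg
  refine ⟨P, hPeff, ?_, ?_⟩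
  · -- subset
    rintro C ⟨hCeff, hCco⟩
    refine ⟨hCeff, ?_⟩
    have hcomm := commute_of_coexistent_proj he hCco
    rw [hdec]
    exact coexistent_of_commute hPsa hP2 ha0 ha1 hb0 hb1 hCeff hcomm
  · -- not superset: find witness in A-tilde not in P-tilde
    intro hback
    by_cases hscal : a = b
    · -- A is a scalar, projL g coexists with A but not with P
      have hA1 : A = (a : ℂ) • 1 := by
        rw [hdec, ← hscal]
        module
      have hXA : Coexistent A (projL g) := by
        rw [hA1]
        exact coexistent_scalar ha0 ha1 hgeff
      have hmem := hback ⟨hgeff, hXA⟩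
      have hc := commute_of_coexistent_proj he hmem.2
      exact hgnc hc.symm
    · -- a ≠ b, so b < a
      have hba : b < a := lt_of_le_of_ne hab (Ne.symm hscal)
      have hnotproj : b ≠ 0 ∨ a ≠ 1 := by
        by_contra hcon
        push_neg at hcon
        obtain ⟨hb', ha'⟩ := hcon
        apply hnot
        have : A = P := by
          rw [hdec, hb', ha']
          push_cast
          module
        rw [this]
        exact projL_rankOne he
      have key : ∀ c : ℝ, 0 < c → c ≤ 1 → Coexistent A ((c : ℂ) • projL g) → False := by
        intro c hc0 hc1 hco
        have hmem := hback ⟨smul_proj_effect hg (le_of_lt hc0) hc1, hco⟩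
        have hc := commute_of_coexistent_proj he hmem.2
        rw [smul_mul_assoc, mul_smul_comm] at hc
        have := smul_right_injective (E2 →L[ℂ] E2)
          (by simpa using ne_of_gt hc0 : (c : ℂ) ≠ 0) hc
        exact hgnc this.symm
      rcases hnotproj with hbne | hane
      · -- use C = b • projL g
        have hb0' : 0 < b := lt_of_le_of_ne hb0 (Ne.symm hbne)
        apply key b hb0' hb1
        refine ⟨(b : ℂ) • projL g, 0, smul_proj_effect hg hb0 hb1, effect_zero, ?_, ?_, ?_⟩
        · have hid : A - (b : ℂ) • projL g
              = ((a - b : ℝ) : ℂ) • projL e + (b : ℂ) • (1 - projL g) := by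
            rw [hdec]
            push_cast
            module
          rw [hid]
          exact (pos_smul (by linarith) (projL_pos e)).add (pos_smul hb0 (proj_effect hg).2)
        · rw [sub_zero]
          exact hA.2
        · rw [add_zero]
      · -- use C = (1 - a) • projL g
        have ha1' : a < 1 := lt_of_le_of_ne ha1 hane
        apply key (1 - a) (by linarith) (by linarith)
        refine ⟨0, ((1 - a : ℝ) : ℂ) • projL g, effect_zero,
          smul_proj_effect hg (by linarith) (by linarith), ?_, ?_, ?_⟩
        · rw [sub_zero]
          exact hA.1
        · have hid : (1 : E2 →L[ℂ] E2) - A - ((1 - a : ℝ) : ℂ) • projL g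
              = ((a - b : ℝ) : ℂ) • (1 - projL e) + ((1 - a : ℝ) : ℂ) • (1 - projL g) := by
            rw [hdec]
            push_cast
            module
          rw [hid]
          exact (pos_smul (by linarith) (proj_effect he).2).add
            (pos_smul (by linarith) (proj_effect hg).2)
        · rw [zero_add]


end E2Lemmas

theorem coexistent_set_minimal_iff_rank_one_projection (A : E2 →L[ℂ] E2)
    (hA : IsEffect A) :
    (¬ ∃ B : E2 →L[ℂ] E2, IsEffect B ∧
        {C : E2 →L[ℂ] E2 | IsEffect C ∧ Coexistent B C} ⊂
          {C : E2 →L[ℂ] E2 | IsEffect C ∧ Coexistent A C}) ↔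
      IsRankOneProjection A := by
  constructor
  · intro hmin
    by_contra hnot
    apply hmin
    obtain ⟨a, b, e, ha0, ha1, hb0, hb1, he, hdec⟩ := spectral_decomp A hA
    obtain ⟨f, hf, hef, hsum⟩ := exists_partner he
    rcases le_total b a with hab | hab
    · exact construction hA he hf hef ha0 ha1 hb0 hb1 hab hdec hnot
    · have hQf : (1 : E2 →L[ℂ] E2) - projL e = projL f := by rw [← hsum]; abel
      have hQe : (1 : E2 →L[ℂ] E2) - projL f = projL e := by rw [← hsum]; abel
      have hdec' : A = (b : ℂ) • projL f + (a : ℂ) • (1 - projL f) := by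
        rw [hdec, hQf, hQe]
        module
      have hfe : ⟪f, e⟫_ℂ = 0 := by rw [← inner_conj_symm, hef, map_zero]
      exact construction hA hf he hfe hb0 hb1 ha0 ha1 hab hdec' hnot
  · intro hrk
    rintro ⟨B, hBeff, hss⟩
    obtain ⟨e, he, hAe⟩ := rankOne_exists_projL hrk
    set P : E2 →L[ℂ] E2 := projL e with hPdef
    have hPsa : IsSelfAdjoint P := projL_sa e
    have hP2 : P * P = P := projL_idem he
    have hBmem : B ∈ {C : E2 →L[ℂ] E2 | IsEffect C ∧ Coexistent B C} :=
      ⟨hBeff, coexistent_self hBeff⟩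
    have hBA := hss.1 hBmem
    rw [Set.mem_setOf_eq, hAe] at hBA
    have hcommB : B * P = P * B := commute_of_coexistent_proj he hBA.2
    have hPBP_pos : (P * B * P).IsPositive := sandwich_pos hPsa hBeff.1
    have hPBP_le : (projL e - P * B * P).IsPositive := by
      have hid : projL e - P * B * P = P * (1 - B) * P := by
        have h : P * (1 - B) * P = P * P - P * B * P := by
          rw [mul_sub, mul_one, sub_mul]
        rw [h, hP2, hPdef]
      rw [hid]
      exact sandwich_pos hPsa hBeff.2
    obtain ⟨α, hα0, hα1, hαeq⟩ := eq_smul_projL he hPBP_pos hPBP_le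
    obtain ⟨f, hf, hef, hsum⟩ := exists_partner he
    have hQf : (1 : E2 →L[ℂ] E2) - P = projL f := by rw [hPdef, ← hsum]; abel
    set Q : E2 →L[ℂ] E2 := projL f with hQdef
    have hQsa : IsSelfAdjoint Q := projL_sa f
    have hQ2 : Q * Q = Q := projL_idem hf
    have hQBQ_pos : (Q * B * Q).IsPositive := sandwich_pos hQsa hBeff.1
    have hQBQ_le : (projL f - Q * B * Q).IsPositive := by
      have hid : projL f - Q * B * Q = Q * (1 - B) * Q := by
        have h : Q * (1 - B) * Q = Q * Q - Q * B * Q := by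
          rw [mul_sub, mul_one, sub_mul]
        rw [h, hQ2, hQdef]
      rw [hid]
      exact sandwich_pos hQsa hBeff.2
    obtain ⟨β, hβ0, hβ1, hβeq⟩ := eq_smul_projL hf hQBQ_pos hQBQ_le
    have hcommBQ : B * Q = Q * B := by
      rw [← hQf]
      have h1 : B * (1 - P) = B - B * P := by rw [mul_sub, mul_one]
      have h2 : (1 - P) * B = B - P * B := by rw [sub_mul, one_mul]
      rw [h1, h2, hcommB]
    have hBP : P * B * P = B * P := by rw [← hcommB, mul_assoc, hP2]
    have hBQ : Q * B * Q = B * Q := by rw [← hcommBQ, mul_assoc, hQ2]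
    have hBdec : B = (α : ℂ) • P + (β : ℂ) • (1 - P) := by
      rw [hQf]
      calc B = B * (P + Q) := by
              rw [show P + Q = 1 from hsum, mul_one]
        _ = B * P + B * Q := by rw [mul_add]
        _ = (α : ℂ) • P + (β : ℂ) • Q := by rw [← hBP, ← hBQ, hαeq, hβeq]
    obtain ⟨C, hCA, hCB⟩ := Set.exists_of_ssubset hss
    apply hCB
    rw [Set.mem_setOf_eq, hAe] at hCA
    refine ⟨hCA.1, ?_⟩
    have hcommC : C * P = P * C := commute_of_coexistent_proj he hCA.2
    rw [hBdec]
    exact coexistent_of_commute hPsa hP2 hα0 hα1 hβ0 hβ1 hCA.1 hcommC
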